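/- Let p : E → X be a fiber bundle with fiber F over a paracompact Hausdorff space X, and suppose F is an absolute extensor for the class of all spaces appearing as closed subsets of X (e.g., F is a contractible ANR and X is metrizable). Then for any closed subset A ⊆ X, every continuous section of p defined over A extends to a continuous section over all of X. -/

import Mathlib

open Set Topology Function

private lemma cont_of_isEmpty' {α β : Type*} [TopologicalSpace α] [TopologicalSpace β]
    [IsEmpty α] (f : α → β) : Continuous f :=
  continuous_def.mpr fun s _ => by
    rw [Set.eq_empty_of_isEmpty (f ⁻¹' s)]; exact isOpen_empty

private lemma paste_closed' {α β : Type*} [TopologicalSpace α] [TopologicalSpace β]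
    {f : α → β} {s t : Set α} (hs : IsClosed s) (ht : IsClosed t)
    (hfs : ContinuousOn f s) (hft : ContinuousOn f t) :
    ContinuousOn f (s ∪ t) := by
  intro x hx
  have h1 : ContinuousWithinAt f s x := by
    by_cases h : x ∈ s
    · exact hfs x h
    · exact continuousWithinAt_of_notMem_closure (by rwa [hs.closure_eq])
  have h2 : ContinuousWithinAt f t x := by
    by_cases h : x ∈ t
    · exact hft x h
    · exact continuousWithinAt_of_notMem_closure (by rwa [ht.closure_eq])
  exact h1.union h2

theorem stmt_13 {X Z F : Type*} [TopologicalSpace X] [T2Space X] [ParacompactSpace X]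
    [TopologicalSpace Z] [TopologicalSpace F]
    (p : Z → X) (hp : Continuous p)
    (htriv : ∀ x : X, ∃ U : Set X, IsOpen U ∧ x ∈ U ∧
      ∃ φ : {z : Z // p z ∈ U} ≃ₜ U × F, ∀ z : {z : Z // p z ∈ U}, ((φ z).1 : X) = p z)
    (hAE : ∀ C : Set X, IsClosed C → ∀ D : Set C, IsClosed D →
      ∀ g : D → F, Continuous g → ∃ g' : C → F, Continuous g' ∧ ∀ d : D, g' d.1 = g d)
    (A : Set X) (hA : IsClosed A)
    (s : A → Z) (hs : Continuous s) (hsec : ∀ a : A, p (s a) = a.1) :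
    ∃ S : X → Z, Continuous S ∧ (∀ x, p (S x) = x) ∧ ∀ a : A, S a.1 = s a := by
  classical
  by_cases hX : Nonempty X
  swap
  · have : IsEmpty X := not_nonempty_iff.mp hX
    exact ⟨fun x => isEmptyElim x, cont_of_isEmpty' _, fun x => isEmptyElim x,
      fun a => isEmptyElim (a.1 : X)⟩
  obtain ⟨x₀⟩ := hX
  -- F is nonempty (extend the empty map over the whole space)
  obtain ⟨g0, -, -⟩ := hAE Set.univ isClosed_univ ∅ isClosed_empty
      (fun d => absurd d.2 (Set.notMem_empty _)) (cont_of_isEmpty' _)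
  have hF : Nonempty F := ⟨g0 ⟨x₀, mem_univ x₀⟩⟩
  obtain ⟨U₀, -, hx₀U₀, φ₀, -⟩ := htriv x₀
  obtain ⟨z₀⟩ : Nonempty Z := ⟨(φ₀.symm (⟨x₀, hx₀U₀⟩, hF.some)).1⟩
  -- a locally finite trivializing cover with a closed shrinking
  choose u uo umem φ hφ using htriv
  have ucov : ⋃ x, u x = univ := iUnion_eq_univ_iff.mpr fun x => ⟨x, umem x⟩
  obtain ⟨v, vo, vcov, vlf, vsub⟩ := precise_refinement u uo ucov
  obtain ⟨w, wcov, wclosed, wsub⟩ := exists_subset_iUnion_closed_subset isClosed_univ vo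
      (fun x _ => vlf.point_finite x) (vcov ▸ subset_rfl)
  have wlf : LocallyFinite w := vlf.subset wsub
  have wsubu : ∀ i, w i ⊆ u i := fun i => (wsub i).trans (vsub i)
  -- domains of partial sections
  set D : Set X → Set X := fun S => A ∪ ⋃ i ∈ S, w i with hD
  have DA : ∀ S, A ⊆ D S := fun S => subset_union_left
  have Dmono : ∀ {S T : Set X}, S ⊆ T → D S ⊆ D T := fun hST =>
    union_subset_union Subset.rfl (biUnion_subset_biUnion_left hST)
  have Dcl : ∀ S : Set X, IsClosed (D S) := by
    intro S
    refine hA.union ?_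
    rw [biUnion_eq_iUnion]
    exact (wlf.comp_injective Subtype.val_injective).isClosed_iUnion fun i => wclosed i.1
  -- the poset of partial sections
  letI : Preorder (Set X × (X → Z)) :=
    { le := fun q q' => q.1 ⊆ q'.1 ∧ EqOn q.2 q'.2 (D q.1)
      le_refl := fun q => ⟨Subset.rfl, fun x _ => rfl⟩
      le_trans := fun q q' q'' h h' =>
        ⟨h.1.trans h'.1, fun x hx => (h.2 hx).trans (h'.2 (Dmono h.1 hx))⟩ }
  set Good : Set (Set X × (X → Z)) :=
    {q | ContinuousOn q.2 (D q.1) ∧ (∀ x ∈ D q.1, p (q.2 x) = x) ∧ ∀ a : A, q.2 a.1 = s a}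
    with hGood
  -- the extension step
  have key : ∀ q ∈ Good, ∀ i : X, ∃ q' ∈ Good, q ≤ q' ∧ i ∈ q'.1 := by
    rintro ⟨S, σ⟩ ⟨hcont, hsec', hagr⟩ i
    by_cases hiS : i ∈ S
    · exact ⟨(S, σ), ⟨hcont, hsec', hagr⟩, le_refl _, hiS⟩
    set Dw : Set (w i) := Subtype.val ⁻¹' (D S) with hDw
    have DwCl : IsClosed Dw := (Dcl S).preimage continuous_subtype_val
    have hmemU : ∀ x : w i, (x : X) ∈ u i := fun x => wsubu i x.2
    have hps : ∀ d : Dw, p (σ d.1.1) ∈ u i := by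
      intro d
      rw [hsec' _ d.2]; exact hmemU d.1
    set g : Dw → F := fun d => (φ i ⟨σ d.1.1, hps d⟩).2 with hg
    have hgc : Continuous g := by
      have h1 : Continuous fun d : Dw => σ d.1.1 :=
        hcont.comp_continuous (continuous_subtype_val.comp continuous_subtype_val)
          (fun d => d.2)
      exact ((φ i).continuous.comp (h1.subtype_mk _)).snd
    obtain ⟨g', hg'c, hg'e⟩ := hAE (w i) (wclosed i) Dw DwCl g hgc
    set τ : w i → Z := fun x => ((φ i).symm (⟨x.1, hmemU x⟩, g' x)).1 with hτ
    have hτc : Continuous τ :=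
      continuous_subtype_val.comp ((φ i).symm.continuous.comp
        ((continuous_subtype_val.subtype_mk _).prodMk hg'c))
    have hτp : ∀ x : w i, p (τ x) = x := by
      intro x
      have h := hφ i ((φ i).symm (⟨x.1, hmemU x⟩, g' x))
      rw [(φ i).apply_symm_apply] at h
      exact h.symm
    have hτσ : ∀ x : w i, (x : X) ∈ D S → τ x = σ x := by
      intro x hx
      have h1 : g' x = g ⟨x, hx⟩ := hg'e ⟨x, hx⟩
      have h2 : ((⟨x.1, hmemU x⟩ : u i), g' x) = φ i ⟨σ x.1, hps ⟨x, hx⟩⟩ := by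
        rw [h1]
        refine Prod.ext (Subtype.ext ?_) rfl
        rw [hφ i, hsec' _ hx]
      rw [hτ]
      show ((φ i).symm (⟨x.1, hmemU x⟩, g' x)).1 = σ x.1
      rw [h2, (φ i).symm_apply_apply]
    set σ' : X → Z := fun x => if h : x ∈ w i then τ ⟨x, h⟩ else σ x with hσ'
    have hσ'wi : ∀ (x) (h : x ∈ w i), σ' x = τ ⟨x, h⟩ := fun x h => dif_pos h
    have hσ'eq : EqOn σ' σ (D S) := by
      intro x hx
      by_cases h : x ∈ w i
      · rw [hσ'wi x h]; exact hτσ ⟨x, h⟩ hx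
      · exact dif_neg h
    have hd' : D (insert i S) = D S ∪ w i := by
      show A ∪ ⋃ j ∈ insert i S, w j = (A ∪ ⋃ j ∈ S, w j) ∪ w i
      rw [biUnion_insert]
      ac_rfl
    have hcont' : ContinuousOn σ' (D S ∪ w i) := by
      apply paste_closed' (Dcl S) (wclosed i)
      · exact hcont.congr hσ'eq
      · rw [continuousOn_iff_continuous_restrict]
        have : (w i).domRestrict σ' = τ := funext fun x => by
          rw [restrict_apply, hσ'wi x.1 x.2]
        rw [this]; exact hτc
    refine ⟨(insert i S, σ'), ⟨?_, ?_, ?_⟩, ⟨subset_insert i S, hσ'eq.symm⟩, mem_insert i S⟩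
    · rw [hd']; exact hcont'
    · intro x hx
      rw [hd'] at hx
      show p (σ' x) = x
      rcases hx with hx | hx
      · rw [hσ'eq hx]; exact hsec' x hx
      · rw [hσ'wi x hx]; exact hτp ⟨x, hx⟩
    · intro a
      show σ' a.1 = s a
      rw [hσ'eq (DA S a.2)]; exact hagr a
  -- the bottom element
  set σA : X → Z := fun x => if h : x ∈ A then s ⟨x, h⟩ else z₀ with hσA
  have hDempty : D ∅ = A := by simp [hD]
  have botGood : (∅, σA) ∈ Good := by
    refine ⟨?_, ?_, ?_⟩
    · show ContinuousOn σA (D ∅)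
      rw [hDempty, continuousOn_iff_continuous_restrict]
      have : A.domRestrict σA = s := funext fun a => by
        rw [restrict_apply, hσA]; exact dif_pos a.2
      rw [this]; exact hs
    · intro x hx
      rw [hDempty] at hx
      show p (σA x) = x
      rw [hσA]
      simp only [dif_pos hx]
      exact hsec ⟨x, hx⟩
    · intro a
      show σA a.1 = s a
      rw [hσA]
      simp only [dif_pos a.2]
  -- chains have upper bounds
  have chainUB : ∀ c ⊆ Good, IsChain (· ≤ ·) c → ∀ y ∈ c, ∃ ub ∈ Good, ∀ z ∈ c, z ≤ ub := by
    intro c hcG hchain y hy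
    set S' : Set X := ⋃ q ∈ c, q.1 with hS'
    set σ' : X → Z := fun x => if h : ∃ q ∈ c, x ∈ D q.1 then h.choose.2 x else σA x with hσ'c
    have consist : ∀ q ∈ c, ∀ q' ∈ c, ∀ x, x ∈ D q.1 → x ∈ D q'.1 → q.2 x = q'.2 x := by
      intro q hq q' hq' x hx hx'
      rcases eq_or_ne q q' with rfl | hne
      · rfl
      rcases hchain hq hq' hne with h | h
      · exact h.2 hx
      · exact (h.2 hx').symm
    have σ'val : ∀ q ∈ c, ∀ x, x ∈ D q.1 → σ' x = q.2 x := by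
      intro q hq x hx
      have hex : ∃ q ∈ c, x ∈ D q.1 := ⟨q, hq, hx⟩
      rw [hσ'c]
      simp only [dif_pos hex]
      exact consist _ hex.choose_spec.1 q hq x hex.choose_spec.2 hx
    have hDS' : ∀ x, x ∈ D S' → ∃ q ∈ c, x ∈ D q.1 := by
      intro x hx
      rcases hx with hx | hx
      · exact ⟨y, hy, DA _ hx⟩
      · simp only [mem_iUnion] at hx
        obtain ⟨j, hjS', hxj⟩ := hx
        simp only [hS', mem_iUnion] at hjS'
        obtain ⟨q, hq, hjq⟩ := hjS'
        exact ⟨q, hq, Or.inr (mem_biUnion hjq hxj)⟩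
    have hub : ∀ q ∈ c, q ≤ (S', σ') := by
      intro q hq
      exact ⟨subset_biUnion_of_mem hq, fun x hx => (σ'val q hq x hx).symm⟩
    refine ⟨(S', σ'), ⟨?_, ?_, ?_⟩, hub⟩
    · -- continuity
      intro x hx
      obtain ⟨N, hN, hNfin⟩ := wlf x
      set N' := interior N with hN'def
      have hN' : N' ∈ 𝓝 x := interior_mem_nhds.mpr hN
      set T : Set X := {j | j ∈ S' ∧ (w j ∩ N').Nonempty} with hT
      have hTfin : T.Finite := hNfin.subset fun j hj =>
        hj.2.mono (inter_subset_inter_right _ interior_subset)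
      have hTsub : ↑hTfin.toFinset ⊆ ⋃ q ∈ c, (q.1 : Set X) := by
        intro j hj
        rw [Finite.coe_toFinset] at hj
        exact hj.1
      have hdir : DirectedOn (fun a b : Set X × (X → Z) => a.1 ⊆ b.1) c :=
        hchain.directedOn.mono fun a b h => h.1
      obtain ⟨q₀, hq₀c, hq₀T⟩ :=
        hdir.exists_mem_subset_of_finset_subset_biUnion ⟨y, hy⟩ hTsub
      have hxN' : x ∈ N' := mem_of_mem_nhds hN'
      have hsub : N' ∩ D S' ⊆ D q₀.1 := by
        rintro y' ⟨hy'N, hy'D⟩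
        rcases hy'D with h | h
        · exact DA _ h
        · simp only [mem_iUnion] at h
          obtain ⟨j, hjS', hj⟩ := h
          have hjT : j ∈ hTfin.toFinset := by
            rw [Finite.mem_toFinset]
            exact ⟨hjS', ⟨y', hj, hy'N⟩⟩
          exact Or.inr (mem_biUnion (hq₀T hjT) hj)
      have hxq₀ : x ∈ D q₀.1 := hsub ⟨hxN', hx⟩
      have hcwa : ContinuousWithinAt σ' (D q₀.1) x :=
        ((hcG hq₀c).1 x hxq₀).congr (fun y' hy' => σ'val q₀ hq₀c y' hy')
          (σ'val q₀ hq₀c x hxq₀)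
      have h2 : ContinuousWithinAt σ' (N' ∩ D S') x := hcwa.mono hsub
      rw [inter_comm] at h2
      exact (continuousWithinAt_inter hN').mp h2
    · intro x hx
      obtain ⟨q, hq, hxq⟩ := hDS' x hx
      show p (σ' x) = x
      rw [σ'val q hq x hxq]
      exact (hcG hq).2.1 x hxq
    · intro a
      show σ' a.1 = s a
      rw [σ'val y hy a.1 (DA _ a.2)]
      exact (hcG hy).2.2 a
  -- Zorn
  obtain ⟨m, -, hmax⟩ := zorn_le_nonempty₀ Good chainUB (∅, σA) botGood
  have hmG : m ∈ Good := hmax.1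
  have hDm : D m.1 = univ := by
    by_contra h
    obtain ⟨x, hx⟩ := (ne_univ_iff_exists_notMem _).mp h
    obtain ⟨j, hj⟩ : ∃ j, x ∈ w j := by
      have := wcov (mem_univ x)
      rwa [mem_iUnion] at this
    obtain ⟨q', hq'G, hle, hjq'⟩ := key m hmG j
    have hqm := hmax.2 hq'G hle
    exact hx (Or.inr (mem_biUnion (hqm.1 hjq') hj))
  refine ⟨m.2, ?_, ?_, hmG.2.2⟩
  · rw [← continuousOn_univ, ← hDm]
    exact hmG.1
  · intro x
    exact hmG.2.1 x (hDm ▸ mem_univ x)
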